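/- Finsler's lemma, second implication: Let Υ ∈ ℝ^{n×n} be symmetric and Γ ∈ ℝ^{m×n}. If ζᵀΥζ < 0 for every nonzero ζ ∈ ℝ^n with Γζ = 0, then there exists a matrix X ∈ ℝ^{n×m} such that Υ + XΓ + ΓᵀXᵀ is negative definite. -/

import Mathlib

open Matrix

private lemma phi_smul {n : ℕ} (A : Matrix (Fin n) (Fin n) ℝ) (t : ℝ) (y : Fin n → ℝ) :
    (t • y) ⬝ᵥ (A *ᵥ (t • y)) = t * t * (y ⬝ᵥ (A *ᵥ y)) := by
  rw [mulVec_smul, smul_dotProduct, dotProduct_smul, smul_eq_mul, smul_eq_mul]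
  ring

/-- Finsler's lemma, direction (i) ⟹ (ii): if `ζᵀΥζ < 0` for every
nonzero `ζ` in the kernel of `Γ`, then there is `X` with `Υ + XΓ + ΓᵀXᵀ ≺ 0`. -/
theorem stmt3 {n m : ℕ} (Υ : Matrix (Fin n) (Fin n) ℝ) (hΥ : Υ.IsSymm)
    (Γ : Matrix (Fin m) (Fin n) ℝ)
    (h : ∀ ζ : Fin n → ℝ, ζ ≠ 0 → Γ *ᵥ ζ = 0 → ζ ⬝ᵥ (Υ *ᵥ ζ) < 0) :
    ∃ X : Matrix (Fin n) (Fin m) ℝ, (-(Υ + X * Γ + Γᵀ * Xᵀ)).PosDef := by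
  set φ : (Fin n → ℝ) → ℝ := fun x => x ⬝ᵥ (Υ *ᵥ x) with hφdef
  set ψ : (Fin n → ℝ) → ℝ := fun x => (Γ *ᵥ x) ⬝ᵥ (Γ *ᵥ x) with hψdef
  have hφc : Continuous φ :=
    continuous_id.dotProduct (continuous_const.matrix_mulVec continuous_id)
  have hψc : Continuous ψ :=
    (continuous_const.matrix_mulVec continuous_id).dotProduct
      (continuous_const.matrix_mulVec continuous_id)
  have hψ0 : ∀ x, 0 ≤ ψ x := fun x =>
    Finset.sum_nonneg fun i _ => mul_self_nonneg _
  -- Step 1: find μ working on the unit sphere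
  obtain ⟨μ, hμ0, hμ⟩ : ∃ μ : ℝ, 0 ≤ μ ∧
      ∀ x ∈ Metric.sphere (0 : Fin n → ℝ) 1, φ x < μ * ψ x := by
    set S := Metric.sphere (0 : Fin n → ℝ) 1 with hS
    have hScomp : IsCompact S := isCompact_sphere _ _
    set A := S ∩ {x | 0 ≤ φ x} with hA
    have hAcomp : IsCompact A := hScomp.inter_right (isClosed_le continuous_const hφc)
    rcases A.eq_empty_or_nonempty with hAe | hAne
    · refine ⟨0, le_refl _, fun x hx => ?_⟩
      have hxA : x ∉ A := by simp [hAe]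
      simp only [hA, Set.mem_inter_iff, Set.mem_setOf_eq, not_and] at hxA
      have := hxA hx
      rw [zero_mul]
      linarith
    · obtain ⟨a, haA, hamin⟩ := hAcomp.exists_isMinOn hAne hψc.continuousOn
      obtain ⟨b, hbS, hbmax⟩ := hScomp.exists_isMaxOn ⟨a, haA.1⟩ hφc.continuousOn
      have ha0 : a ≠ 0 := by
        have : ‖a‖ = 1 := by
          have h1 := haA.1
          rwa [hS, Metric.mem_sphere, dist_zero_right] at h1
        intro hc; rw [hc] at this; simp at this
      have hδ : 0 < ψ a := by
        rcases (hψ0 a).lt_or_eq with hlt | heq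
        · exact hlt
        · exfalso
          have hker : Γ *ᵥ a = 0 := dotProduct_self_eq_zero.mp heq.symm
          exact absurd (h a ha0 hker) (not_lt.mpr haA.2)
      set δ := ψ a with hδdef
      set C := φ b with hCdef
      have hC0 : 0 ≤ C := le_trans haA.2 (isMaxOn_iff.mp hbmax a haA.1)
      have hq0 : 0 < (C + 1) / δ := div_pos (by linarith) hδ
      refine ⟨(C + 1) / δ, le_of_lt hq0, fun x hxS => ?_⟩
      by_cases hx : 0 ≤ φ x
      · have hxA : x ∈ A := ⟨hxS, hx⟩
        have h1 : φ x ≤ C := isMaxOn_iff.mp hbmax x hxS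
        have h2 : δ ≤ ψ x := isMinOn_iff.mp hamin x hxA
        have h3 : (C + 1) / δ * δ ≤ (C + 1) / δ * ψ x :=
          mul_le_mul_of_nonneg_left h2 (le_of_lt hq0)
        rw [div_mul_cancel₀ _ (ne_of_gt hδ)] at h3
        linarith
      · push_neg at hx
        have : 0 ≤ (C + 1) / δ * ψ x := mul_nonneg (le_of_lt hq0) (hψ0 x)
        linarith
  -- Step 2: scale to all nonzero vectors
  have key : ∀ ζ : Fin n → ℝ, ζ ≠ 0 → φ ζ < μ * ψ ζ := by
    intro ζ hζ
    have hn : 0 < ‖ζ‖ := norm_pos_iff.mpr hζ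
    set c : ℝ := ‖ζ‖ with hc
    set x : Fin n → ℝ := c⁻¹ • ζ with hxdef
    have hxS : x ∈ Metric.sphere (0 : Fin n → ℝ) 1 := by
      simp only [Metric.mem_sphere, dist_zero_right, hxdef, norm_smul, norm_inv,
        Real.norm_eq_abs, abs_of_pos hn]
      exact inv_mul_cancel₀ (ne_of_gt hn)
    have hcx : c • x = ζ := by
      rw [hxdef, smul_smul, mul_inv_cancel₀ (ne_of_gt hn), one_smul]
    have h1 : φ ζ = c * c * φ x := by rw [← hcx]; exact phi_smul Υ c x
    have h2 : ψ ζ = c * c * ψ x := by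
      rw [← hcx]
      show (Γ *ᵥ (c • x)) ⬝ᵥ (Γ *ᵥ (c • x)) = c * c * ((Γ *ᵥ x) ⬝ᵥ (Γ *ᵥ x))
      rw [mulVec_smul, smul_dotProduct, dotProduct_smul, smul_eq_mul, smul_eq_mul]
      ring
    have hcc : 0 < c * c := mul_pos hn hn
    have := mul_lt_mul_of_pos_left (hμ x hxS) hcc
    rw [h1, h2]
    calc c * c * φ x < c * c * (μ * ψ x) := this
      _ = μ * (c * c * ψ x) := by ring
  -- Step 3: the witness
  refine ⟨(-(μ / 2)) • Γᵀ, ?_⟩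
  have hM : -(Υ + (-(μ / 2)) • Γᵀ * Γ + Γᵀ * ((-(μ / 2)) • Γᵀ)ᵀ) = μ • (Γᵀ * Γ) - Υ := by
    rw [transpose_smul, transpose_transpose, Matrix.smul_mul, Matrix.mul_smul]
    ext i j
    simp only [Matrix.neg_apply, Matrix.add_apply, Matrix.smul_apply, Matrix.sub_apply,
      smul_eq_mul]
    ring
  rw [hM]
  refine Matrix.PosDef.of_dotProduct_mulVec_pos ?_ ?_
  · -- Hermitian
    ext i j
    simp only [conjTranspose_apply, Matrix.sub_apply, Matrix.smul_apply, smul_eq_mul,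
      star_trivial, mul_apply, transpose_apply]
    have hs : Υ j i = Υ i j := by
      have := congrFun (congrFun hΥ j) i
      simpa [transpose_apply] using this.symm
    rw [hs]
    congr 1
    congr 1
    exact Finset.sum_congr rfl fun k _ => mul_comm _ _
  · intro x hx
    have hsx : star x = x := by simp
    rw [hsx, sub_mulVec, dotProduct_sub, smul_mulVec, dotProduct_smul, smul_eq_mul,
      ← mulVec_mulVec, dotProduct_mulVec x Γᵀ, vecMul_transpose]
    have := key x hx
    rw [hφdef, hψdef] at this
    simp only at this
    linarith
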